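/- A 2-cell α = (ᾱ, α̲) in GTop is cartesian for the fibration GTop^co → Top_≅^co if and only if its upstairs component ᾱ is a natural isomorphism. -/
import Mathlib


open CategoryTheory Bicategory

universe w v u

/-!
We work with an ambient 2-category `T` of elementary toposes (with natural
numbers object), geometric morphisms, and natural transformations, together
with a predicate `Bdd` singling out the bounded geometric morphisms.
`Top_≅` is recovered by restricting 2-cells downstairs to isomorphisms.
-/

/-- 0-cells of `GTop`: bounded geometric morphisms `p : E → S`. -/
structure GTopObj (T : Type u) [Bicategory.{w, v} T]
    (Bdd : ∀ X Y : T, (X ⟶ Y) → Prop) where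
  top : T
  base : T
  p : top ⟶ base
  bounded : Bdd top base p

variable {T : Type u} [Bicategory.{w, v} T] {Bdd : ∀ X Y : T, (X ⟶ Y) → Prop}

/-- 1-cells of `GTop`: squares `(f̄, f̲)` with a specified isomorphism
`f̄ ≫ p₁ ≅ p₀ ≫ f̲`. -/
structure GTopHom (P Q : GTopObj T Bdd) where
  up : P.top ⟶ Q.top
  down : P.base ⟶ Q.base
  sq : up ≫ Q.p ≅ P.p ≫ down

/-- 2-cells of `GTop`: compatible pairs of natural transformations `(ᾱ, α̲)`,
with the downstairs component `α̲` invertible. -/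
@[ext]
structure GTopTwo {P Q : GTopObj T Bdd} (f g : GTopHom P Q) where
  up : f.up ⟶ g.up
  down : f.down ⟶ g.down
  down_isIso : IsIso down
  compat : f.sq.hom ≫ (P.p ◁ down) = (up ▷ Q.p) ≫ g.sq.hom

/-- The hom-categories of `GTop` (vertical composition of 2-cells). -/
instance {P Q : GTopObj T Bdd} : Category (GTopHom P Q) where
  Hom := GTopTwo
  id f := ⟨𝟙 f.up, 𝟙 f.down, inferInstance, by simp⟩
  comp {f g h} α β :=
    ⟨α.up ≫ β.up, α.down ≫ β.down,
      by haveI := α.down_isIso; haveI := β.down_isIso; infer_instance,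
      by
        rw [Bicategory.whiskerLeft_comp, Bicategory.comp_whiskerRight,
          ← Category.assoc, α.compat, Category.assoc, β.compat, ← Category.assoc]⟩
  id_comp α := by apply GTopTwo.ext <;> simp
  comp_id α := by apply GTopTwo.ext <;> simp
  assoc α β γ := by apply GTopTwo.ext <;> simp

/-- Composition of 1-cells of `GTop` (pasting of squares). -/
def GTopHom.comp {P Q R : GTopObj T Bdd} (f : GTopHom P Q) (g : GTopHom Q R) :
    GTopHom P R where
  up := f.up ≫ g.up
  down := f.down ≫ g.down
  sq := Bicategory.associator _ _ _ ≪≫ Bicategory.whiskerLeftIso f.up g.sq ≪≫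
    (Bicategory.associator _ _ _).symm ≪≫ Bicategory.whiskerRightIso f.sq g.down ≪≫
    Bicategory.associator _ _ _

/-- Cartesianness of a 1-cell of `GTop` for the forgetful 2-functor
`GTop^co → Top_≅^co`, in the sense of Buckley's fibrations of bicategories:
the comparison functor from each hom-category `GTop(r, p₀)` to the
pseudopullback of `GTop(r, p₁) → Top_≅(r.base, p₁.base) ← Top_≅(r.base, p₀.base)`
is essentially surjective and fully faithful. -/
def IsCartesianGTop {P Q : GTopObj T Bdd} (f : GTopHom P Q) : Prop :=
  (∀ (Z : GTopObj T Bdd) (g : GTopHom Z Q) (h : Z.base ⟶ P.base)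
      (θ : h ≫ f.down ≅ g.down),
    ∃ (k : GTopHom Z P) (βg : k.comp f ≅ g) (βh : k.down ≅ h),
      GTopTwo.down βg.hom = (βh.hom ▷ f.down) ≫ θ.hom) ∧
  (∀ (Z : GTopObj T Bdd) (k k' : GTopHom Z P) (u : k.comp f ⟶ k'.comp f)
      (d : k.down ⟶ k'.down), IsIso d →
    GTopTwo.down u = d ▷ f.down →
    ∃! e : k ⟶ k', GTopTwo.down e = d ∧ GTopTwo.up e ▷ f.up = GTopTwo.up u)

/-- A square `w : p ≫ f ≅ q ≫ g` exhibits `P` as a pseudopullback (bilimit) of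
`f` and `g`: elementwise statement of the universal property. -/
def IsPseudoPullback {P X Y Z : T} (p : P ⟶ X) (f : X ⟶ Z) (q : P ⟶ Y) (g : Y ⟶ Z)
    (w : p ≫ f ≅ q ≫ g) : Prop :=
  (∀ (W : T) (a : W ⟶ X) (b : W ⟶ Y) (θ : a ≫ f ≅ b ≫ g),
    ∃ (c : W ⟶ P) (i : c ≫ p ≅ a) (j : c ≫ q ≅ b),
      (i.hom ▷ f) ≫ θ.hom =
        (Bicategory.associator c p f).hom ≫ (c ◁ w.hom) ≫
          (Bicategory.associator c q g).inv ≫ (j.hom ▷ g)) ∧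
  (∀ (W : T) (c c' : W ⟶ P) (u : c ≫ p ⟶ c' ≫ p) (v : c ≫ q ⟶ c' ≫ q),
    (Bicategory.associator c p f).hom ≫ (c ◁ w.hom) ≫
        (Bicategory.associator c q g).inv ≫ (v ▷ g) =
      (u ▷ f) ≫ (Bicategory.associator c' p f).hom ≫ (c' ◁ w.hom) ≫
        (Bicategory.associator c' q g).inv →
    ∃! e : c ⟶ c', (e ▷ p) = u ∧ (e ▷ q) = v)

/-- Cartesianness of a 2-cell `α : f → g` for the fibration
`GTop^co → Top_≅^co` (because of the `co`-dualization this is the cocartesian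
lifting property in `GTop`, fibred over the downstairs 2-cells, which are
required to be invertible as 2-cells of `Top_≅`). -/
def IsCartesianTwoGTop {P Q : GTopObj T Bdd} {f g : GTopHom P Q} (α : f ⟶ g) : Prop :=
  ∀ (h : GTopHom P Q) (β : f ⟶ h) (δ : g.down ⟶ h.down), IsIso δ →
    GTopTwo.down α ≫ δ = GTopTwo.down β →
    ∃! γ : g ⟶ h, GTopTwo.down γ = δ ∧ α ≫ γ = β

/-- a 2-cell `α = (ᾱ, α̲)` in `GTop` is cartesian for the
fibration `GTop^co → Top_≅^co` if and only if its upstairs component `ᾱ`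
is a (natural) isomorphism. -/
theorem gtop_twoCell_cartesian_iff_up_iso
    {P Q : GTopObj T Bdd} {f g : GTopHom P Q} (α : f ⟶ g) :
    IsCartesianTwoGTop α ↔ IsIso (GTopTwo.up α) := by
  constructor
  · intro hc
    haveI := α.down_isIso
    obtain ⟨γ, ⟨hd, hcomp⟩, _⟩ := hc f (𝟙 f) (inv α.down) inferInstance (by simp; rfl)
    obtain ⟨γ', ⟨hd', hcomp'⟩, huniq⟩ := hc g α (𝟙 g.down) inferInstance (by simp)
    have e1 : γ ≫ α = γ' := by
      refine huniq (γ ≫ α) ⟨?_, ?_⟩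
      · show γ.down ≫ α.down = 𝟙 g.down
        rw [hd]; simp
      · rw [← Category.assoc, hcomp, Category.id_comp]
    have e2 : 𝟙 g = γ' := huniq (𝟙 g) ⟨rfl, by simp⟩
    have h1 : γ ≫ α = 𝟙 g := by rw [e1, ← e2]
    exact ⟨⟨γ.up, congrArg GTopTwo.up hcomp, congrArg GTopTwo.up h1⟩⟩
  · intro hiso h β δ hδ hβ
    haveI : IsIso (α.up ▷ Q.p) := by infer_instance
    refine ⟨⟨inv α.up ≫ β.up, δ, hδ, ?_⟩, ⟨rfl, ?_⟩, ?_⟩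
    · rw [← cancel_epi (α.up ▷ Q.p), ← Category.assoc, ← α.compat, Category.assoc,
        ← Bicategory.whiskerLeft_comp, hβ, β.compat, Bicategory.comp_whiskerRight]
      simp only [← Bicategory.comp_whiskerRight]
      rw [← Bicategory.comp_whiskerRight_assoc, IsIso.hom_inv_id_assoc]
    · apply GTopTwo.ext
      · show α.up ≫ (inv α.up ≫ β.up) = β.up
        simp
      · exact hβ
    · rintro γ' ⟨h1, h2⟩
      apply GTopTwo.ext
      · have := congrArg GTopTwo.up h2
        show γ'.up = inv α.up ≫ β.up
        rw [← this]
        show γ'.up = inv α.up ≫ α.up ≫ γ'.up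
        simp
      · exact h1
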